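/- Let t > 2 be an integer and let G be a finite connected simple graph with n vertices, m edges (m ≥ 1), minimum degree δ(G) and spectral radius ρ(G). Then k_t(G) = (2m − ρ(G) − (n − t + 1)·⌈δ(G)/(t−1)⌉) / (t(t−2)) if and only if G is regular and admits a K_t-decomposition. -/

import Mathlib

open Finset SimpleGraph Polynomial

variable {V : Type*}

/-- A clique partition of `G`: a set of cliques of `G` such that every edge of `G`
lies in exactly one of them. -/
def IsCliquePartition [DecidableEq V] (G : SimpleGraph V) (P : Finset (Finset V)) : Prop :=
  (∀ s ∈ P, G.IsClique (s : Set V)) ∧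
    ∀ u v : V, G.Adj u v → ∃! s, s ∈ P ∧ u ∈ s ∧ v ∈ s

/-- The spectral radius of a finite graph: the largest eigenvalue of its adjacency matrix. -/
noncomputable def specRad [Fintype V] [DecidableEq V] (G : SimpleGraph V)
    [DecidableRel G.Adj] : ℝ :=
  sSup {μ : ℝ | Module.End.HasEigenvalue (Matrix.toLin' (G.adjMatrix ℝ)) μ}

/-- `cpT G t` : the minimum number of cliques in a clique partition of `G` in which
every clique has at most `t` vertices. -/
noncomputable def cpT [DecidableEq V] (G : SimpleGraph V) (t : ℕ) : ℕ :=
  sInf {m | ∃ P : Finset (Finset V),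
    IsCliquePartition G P ∧ (∀ s ∈ P, s.card ≤ t) ∧ P.card = m}

/-- `cp G` : the clique partition number of `G`. -/
noncomputable def cp [DecidableEq V] (G : SimpleGraph V) : ℕ :=
  sInf {m | ∃ P : Finset (Finset V), IsCliquePartition G P ∧ P.card = m}

/-- `piT G t` : the minimum total size of a clique partition of `G` in which
every clique has at most `t` vertices. -/
noncomputable def piT [DecidableEq V] (G : SimpleGraph V) (t : ℕ) : ℕ :=
  sInf {m | ∃ P : Finset (Finset V),
    IsCliquePartition G P ∧ (∀ s ∈ P, s.card ≤ t) ∧ ∑ s ∈ P, s.card = m}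

/-- `piTotal G` : the minimum total size of a clique partition of `G`. -/
noncomputable def piTotal [DecidableEq V] (G : SimpleGraph V) : ℕ :=
  sInf {m | ∃ P : Finset (Finset V), IsCliquePartition G P ∧ ∑ s ∈ P, s.card = m}

/-- `kT G t` : the maximum number of pairwise edge-disjoint `t`-cliques in `G`
(`t`-cliques are edge-disjoint iff they share at most one vertex). -/
noncomputable def kT [DecidableEq V] (G : SimpleGraph V) (t : ℕ) : ℕ :=
  sSup {m | ∃ S : Finset (Finset V), (∀ s ∈ S, G.IsNClique t s) ∧
    (∀ s₁ ∈ S, ∀ s₂ ∈ S, s₁ ≠ s₂ → (s₁ ∩ s₂).card ≤ 1) ∧ S.card = m}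

open Matrix

section Aux

section Spectral
variable [Fintype V] [DecidableEq V] (G : SimpleGraph V) [DecidableRel G.Adj]

private lemma eigen_rows (y : V → ℝ) {μ : ℝ}
    (h : Matrix.toLin' (G.adjMatrix ℝ) y = μ • y) (v : V) :
    ∑ w ∈ G.neighborFinset v, y w = μ * y v := by
  rw [Matrix.toLin'_apply] at h
  have := congrFun h v
  simpa using this

private lemma adj_eigen_bound {x : V → ℝ} (hx : ∀ v, 0 < x v) {μ₀ : ℝ}
    (hrow : ∀ v : V, ∑ w ∈ G.neighborFinset v, x w ≤ μ₀ * x v)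
    {μ : ℝ} (hμ : Module.End.HasEigenvalue (Matrix.toLin' (G.adjMatrix ℝ)) μ) :
    |μ| ≤ μ₀ := by
  obtain ⟨y, hy⟩ := hμ.exists_hasEigenvector
  have heq := eigen_rows G y hy.apply_eq_smul
  obtain ⟨v0, hv0⟩ := Function.ne_iff.1 hy.2
  have : Nonempty V := ⟨v0⟩
  obtain ⟨u, -, hu⟩ := Finset.exists_max_image Finset.univ (fun v => |y v| / x v)
    ⟨v0, Finset.mem_univ v0⟩
  set c : ℝ := |y u| / x u with hc
  have hcpos : 0 < c := lt_of_lt_of_le (div_pos (abs_pos.2 hv0) (hx v0)) (hu v0 (mem_univ v0))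
  have hcx : ∀ v, |y v| ≤ c * x v := fun v =>
    (div_le_iff₀ (hx v)).1 (hu v (mem_univ v))
  have hyu : c * x u = |y u| := div_mul_cancel₀ _ (ne_of_gt (hx u))
  have key : |μ| * |y u| ≤ μ₀ * |y u| := by
    calc |μ| * |y u| = |μ * y u| := (abs_mul μ (y u)).symm
      _ = |∑ w ∈ G.neighborFinset u, y w| := by rw [heq u]
      _ ≤ ∑ w ∈ G.neighborFinset u, |y w| := Finset.abs_sum_le_sum_abs _ _
      _ ≤ ∑ w ∈ G.neighborFinset u, c * x w := Finset.sum_le_sum (fun w _ => hcx w)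
      _ = c * ∑ w ∈ G.neighborFinset u, x w := by rw [Finset.mul_sum]
      _ ≤ c * (μ₀ * x u) := by
          exact mul_le_mul_of_nonneg_left (hrow u) (le_of_lt hcpos)
      _ = μ₀ * (c * x u) := by ring
      _ = μ₀ * |y u| := by rw [hyu]
  have hyupos : 0 < |y u| := by rw [← hyu]; exact mul_pos hcpos (hx u)
  exact le_of_mul_le_mul_right key hyupos

private lemma eigen_bddAbove :
    BddAbove {μ : ℝ | Module.End.HasEigenvalue (Matrix.toLin' (G.adjMatrix ℝ)) μ} := by
  refine ⟨(Fintype.card V : ℝ), fun μ hμ => ?_⟩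
  refine le_trans (le_abs_self μ) (adj_eigen_bound G (x := fun _ => 1) (fun v => one_pos)
    (μ₀ := (Fintype.card V : ℝ)) (fun v => ?_) hμ)
  simp only [Finset.sum_const, nsmul_eq_mul, mul_one]
  exact_mod_cast Nat.cast_le.2 (le_of_lt (G.degree_lt_card_verts v))

private lemma eigen_nonempty [Nonempty V] :
    {μ : ℝ | Module.End.HasEigenvalue (Matrix.toLin' (G.adjMatrix ℝ)) μ}.Nonempty := by
  have hA : (G.adjMatrix ℝ).IsHermitian := by
    ext i j; simp [Matrix.conjTranspose_apply, SimpleGraph.adj_comm]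
  set j : V := Classical.arbitrary V
  have hne : (⇑(hA.eigenvectorBasis j) : V → ℝ) ≠ 0 := by
    have := (hA.eigenvectorBasis).toBasis.ne_zero j
    refine fun h => this ?_
    rw [OrthonormalBasis.coe_toBasis]
    apply WithLp.ofLp_injective
    simpa using h
  refine ⟨hA.eigenvalues j, ?_⟩
  refine Module.End.hasEigenvalue_of_hasEigenvector ⟨Module.End.mem_eigenspace_iff.2 ?_, hne⟩
  rw [Matrix.toLin'_apply]
  exact hA.mulVec_eigenvectorBasis j

private lemma specRad_mem [Nonempty V] :
    Module.End.HasEigenvalue (Matrix.toLin' (G.adjMatrix ℝ)) (specRad G) := by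
  have hfin : {μ : ℝ | Module.End.HasEigenvalue (Matrix.toLin' (G.adjMatrix ℝ)) μ}.Finite :=
    Module.End.finite_hasEigenvalue _
  exact (eigen_nonempty G).csSup_mem hfin

private lemma specRad_le [Nonempty V] {x : V → ℝ} (hx : ∀ v, 0 < x v) {μ₀ : ℝ}
    (hrow : ∀ v : V, ∑ w ∈ G.neighborFinset v, x w ≤ μ₀ * x v) :
    specRad G ≤ μ₀ :=
  csSup_le (eigen_nonempty G)
    (fun _ hμ => le_trans (le_abs_self _) (adj_eigen_bound G hx hrow hμ))

private lemma le_specRad {μ : ℝ}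
    (hμ : Module.End.HasEigenvalue (Matrix.toLin' (G.adjMatrix ℝ)) μ) :
    μ ≤ specRad G :=
  le_csSup (eigen_bddAbove G) hμ

/-- Equality analysis: if the spectral radius equals the test bound, all rows are tight. -/
private lemma rows_tight (hconn : G.Connected) {x : V → ℝ} (hx : ∀ v, 0 < x v) {μ₀ : ℝ}
    (hμ₀ : 0 < μ₀) (hrow : ∀ v : V, ∑ w ∈ G.neighborFinset v, x w ≤ μ₀ * x v)
    (heig : Module.End.HasEigenvalue (Matrix.toLin' (G.adjMatrix ℝ)) μ₀) :
    ∀ v : V, ∑ w ∈ G.neighborFinset v, x w = μ₀ * x v := by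
  obtain ⟨y0, hy0⟩ := heig.exists_hasEigenvector
  obtain ⟨v0, hv0⟩ := Function.ne_iff.1 hy0.2
  have : Nonempty V := ⟨v0⟩
  obtain ⟨u, -, hu⟩ := Finset.exists_max_image Finset.univ (fun v => |y0 v| / x v)
    ⟨v0, Finset.mem_univ v0⟩
  set c : ℝ := |y0 u| / x u with hc
  have hcpos : 0 < c := lt_of_lt_of_le (div_pos (abs_pos.2 hv0) (hx v0)) (hu v0 (mem_univ v0))
  -- replace y0 by ±y0 so that value at u is positive
  set y : V → ℝ := if 0 ≤ y0 u then y0 else -y0 with hy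
  have heq : ∀ v, ∑ w ∈ G.neighborFinset v, y w = μ₀ * y v := by
    intro v
    by_cases h : 0 ≤ y0 u <;> simp only [hy, h, if_true, if_false, Pi.neg_apply] <;>
      [skip; rw [Finset.sum_neg_distrib]] <;>
      rw [eigen_rows G y0 hy0.apply_eq_smul v] <;> ring
  have habs : ∀ v, |y v| = |y0 v| := by
    intro v; by_cases h : 0 ≤ y0 u <;> simp [hy, h]
  have hyu : y u = c * x u := by
    have : |y u| = c * x u := by rw [habs u, hc, div_mul_cancel₀ _ (ne_of_gt (hx u))]
    rcases abs_cases (y u) with ⟨h1, -⟩ | ⟨h1, h2⟩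
    · rw [← h1, this]
    · exfalso
      by_cases h : 0 ≤ y0 u
      · have : y u = y0 u := by simp [hy, h]
        linarith [this ▸ h2, h]
      · have : y u = -y0 u := by simp [hy, h]
        push_neg at h
        linarith [this ▸ h2]
  have hcx : ∀ v, y v ≤ c * x v := fun v =>
    le_trans (le_abs_self _) (by rw [habs v]; exact (div_le_iff₀ (hx v)).1 (hu v (mem_univ v)))
  -- propagate: good vertices
  have main : ∀ v : V, y v = c * x v →
      ((∑ w ∈ G.neighborFinset v, x w = μ₀ * x v) ∧ ∀ w ∈ G.neighborFinset v, y w = c * x w) := by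
    intro v hv
    have h1 : ∑ w ∈ G.neighborFinset v, y w = μ₀ * (c * x v) := by rw [heq v, hv]
    have h2 : ∑ w ∈ G.neighborFinset v, (c * x w - y w) = c * (∑ w ∈ G.neighborFinset v, x w)
        - μ₀ * (c * x v) := by
      rw [Finset.sum_sub_distrib, h1, Finset.mul_sum]
    have h3 : ∑ w ∈ G.neighborFinset v, (c * x w - y w) ≤ 0 := by
      rw [h2]
      have := mul_le_mul_of_nonneg_left (hrow v) (le_of_lt hcpos)
      nlinarith
    have h4 : ∀ w ∈ G.neighborFinset v, c * x w - y w = 0 := by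
      intro w hw
      by_contra hne
      have hlt : 0 < c * x w - y w := lt_of_le_of_ne (by linarith [hcx w]) (Ne.symm hne)
      have : 0 < ∑ w ∈ G.neighborFinset v, (c * x w - y w) :=
        Finset.sum_pos' (fun w _ => by linarith [hcx w]) ⟨w, hw, hlt⟩
      linarith
    constructor
    · have h5 : ∑ w ∈ G.neighborFinset v, y w = c * ∑ w ∈ G.neighborFinset v, x w := by
        rw [Finset.mul_sum]
        exact Finset.sum_congr rfl (fun w hw => by linarith [h4 w hw])
      have h6 : c * ∑ w ∈ G.neighborFinset v, x w = c * (μ₀ * x v) := by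
        rw [← h5, h1]; ring
      exact mul_left_cancel₀ (ne_of_gt hcpos) h6
    · exact fun w hw => by linarith [h4 w hw]
  have good : ∀ (a b : V), G.Walk a b → y a = c * x a → y b = c * x b := by
    intro a b p
    induction p with
    | nil => exact id
    | cons hadj p ih =>
        intro ha
        exact ih ((main _ ha).2 _ (by rwa [SimpleGraph.mem_neighborFinset]))
  intro v
  exact (main v (good u v (hconn.preconnected u v).some hyu)).1

end Spectral

section Comb
variable [Fintype V] [DecidableEq V] {G : SimpleGraph V} [DecidableRel G.Adj]

private lemma part_inter_le_one {P : Finset (Finset V)} (hP : IsCliquePartition G P)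
    {s₁ s₂ : Finset V} (h₁ : s₁ ∈ P) (h₂ : s₂ ∈ P) (hne : s₁ ≠ s₂) : (s₁ ∩ s₂).card ≤ 1 := by
  by_contra h
  push_neg at h
  obtain ⟨a, ha, b, hb, hab⟩ := Finset.one_lt_card.1 h
  rw [Finset.mem_inter] at ha hb
  have hadj : G.Adj a b := hP.1 s₁ h₁ ha.1 hb.1 hab
  obtain ⟨s, -, hu⟩ := hP.2 a b hadj
  exact hne ((hu s₁ ⟨h₁, ha.1, hb.1⟩).trans (hu s₂ ⟨h₂, ha.2, hb.2⟩).symm)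

private lemma degree_eq_sum_parts {P : Finset (Finset V)} (hP : IsCliquePartition G P) (v : V) :
    G.degree v = ∑ s ∈ P.filter (v ∈ ·), (s.card - 1) := by
  have hbU : G.neighborFinset v = (P.filter (v ∈ ·)).biUnion (fun s => s.erase v) := by
    ext w
    simp only [SimpleGraph.mem_neighborFinset, Finset.mem_biUnion, Finset.mem_filter,
      Finset.mem_erase]
    constructor
    · intro hadj
      obtain ⟨s, ⟨hs, hv, hw⟩, -⟩ := hP.2 v w hadj
      exact ⟨s, ⟨hs, hv⟩, hadj.ne', hw⟩
    · rintro ⟨s, ⟨hs, hv⟩, hwv, hw⟩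
      exact hP.1 s hs hv hw (Ne.symm hwv)
  have hdisj : ∀ s₁ ∈ P.filter (v ∈ ·), ∀ s₂ ∈ P.filter (v ∈ ·), s₁ ≠ s₂ →
      Disjoint (s₁.erase v) (s₂.erase v) := by
    intro s₁ hs₁ s₂ hs₂ hne
    rw [Finset.mem_filter] at hs₁ hs₂
    rw [Finset.disjoint_left]
    intro w hw₁ hw₂
    rw [Finset.mem_erase] at hw₁ hw₂
    have hadj : G.Adj v w := hP.1 s₁ hs₁.1 hs₁.2 hw₁.2 (Ne.symm hw₁.1)
    obtain ⟨s, -, hu⟩ := hP.2 v w hadj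
    exact hne ((hu s₁ ⟨hs₁.1, hs₁.2, hw₁.2⟩).trans (hu s₂ ⟨hs₂.1, hs₂.2, hw₂.2⟩).symm)
  rw [← SimpleGraph.card_neighborFinset_eq_degree, hbU, Finset.card_biUnion hdisj]
  refine Finset.sum_congr rfl fun s hs => ?_
  rw [Finset.mem_filter] at hs
  rw [Finset.card_erase_of_mem hs.2]

private lemma double_count (P : Finset (Finset V)) (f : Finset V → ℕ) :
    ∑ v : V, ∑ s ∈ P.filter (v ∈ ·), f s = ∑ s ∈ P, s.card * f s := by
  simp_rw [Finset.sum_filter]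
  rw [Finset.sum_comm]
  refine Finset.sum_congr rfl fun s _ => ?_
  rw [Finset.sum_ite_mem, Finset.univ_inter, Finset.sum_const, smul_eq_mul]

private lemma pair_clique {u v : V} (h : G.Adj u v) : G.IsClique ({u, v} : Finset V) := by
  intro a ha b hb hne
  simp only [Finset.coe_insert, Set.mem_insert_iff, Finset.coe_singleton,
    Set.mem_singleton_iff] at ha hb
  rcases ha with rfl | rfl <;> rcases hb with rfl | rfl
  · exact absurd rfl hne
  · exact h
  · exact h.symm
  · exact absurd rfl hne

private lemma exists_extension {t : ℕ} (ht : 2 < t) {F : Finset (Finset V)}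
    (hF1 : ∀ s ∈ F, G.IsNClique t s)
    (hF2 : ∀ s₁ ∈ F, ∀ s₂ ∈ F, s₁ ≠ s₂ → (s₁ ∩ s₂).card ≤ 1) :
    ∃ P : Finset (Finset V), IsCliquePartition G P ∧ F ⊆ P ∧
      ∀ s ∈ P, s ∈ F ∨ s.card = 2 := by
  classical
  set L : Finset (Finset V) :=
    ((Finset.univ ×ˢ Finset.univ).filter
      (fun p : V × V => G.Adj p.1 p.2 ∧ ∀ s ∈ F, ¬(p.1 ∈ s ∧ p.2 ∈ s))).image
      (fun p => ({p.1, p.2} : Finset V)) with hL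
  have hLmem : ∀ s ∈ L, ∃ p : V × V, G.Adj p.1 p.2 ∧ (∀ s' ∈ F, ¬(p.1 ∈ s' ∧ p.2 ∈ s')) ∧
      s = {p.1, p.2} := by
    intro s hs
    rw [hL, Finset.mem_image] at hs
    obtain ⟨p, hp, rfl⟩ := hs
    rw [Finset.mem_filter] at hp
    exact ⟨p, hp.2.1, hp.2.2, rfl⟩
  refine ⟨F ∪ L, ⟨?_, ?_⟩, Finset.subset_union_left, ?_⟩
  · intro s hs
    rcases Finset.mem_union.1 hs with hs | hs
    · exact (hF1 s hs).1
    · obtain ⟨p, hadj, -, rfl⟩ := hLmem s hs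
      exact pair_clique hadj
  · intro u v hadj
    by_cases hcov : ∃ s ∈ F, u ∈ s ∧ v ∈ s
    · obtain ⟨s, hs, hu, hv⟩ := hcov
      refine ⟨s, ⟨Finset.mem_union_left _ hs, hu, hv⟩, ?_⟩
      rintro y ⟨hy, hyu, hyv⟩
      rcases Finset.mem_union.1 hy with hy | hy
      · by_contra hne
        have := hF2 y hy s hs hne
        have h2 : 1 < (y ∩ s).card := by
          refine Finset.one_lt_card.2 ⟨u, ?_, v, ?_, hadj.ne⟩ <;>
            rw [Finset.mem_inter] <;> exact ⟨by assumption, by assumption⟩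
        omega
      · exfalso
        obtain ⟨p, hpadj, hunc, heq⟩ := hLmem y hy
        have hsub : ({u, v} : Finset V) ⊆ y := by
          intro w hw
          rcases Finset.mem_insert.1 hw with rfl | hw
          · exact hyu
          · rw [Finset.mem_singleton.1 hw]; exact hyv
        have hycard : y.card = 2 := by rw [heq]; exact Finset.card_pair hpadj.ne
        have : ({u, v} : Finset V) = y :=
          Finset.eq_of_subset_of_card_le hsub (by rw [hycard, Finset.card_pair hadj.ne])
        have hin : ∀ w ∈ ({u, v} : Finset V), w ∈ s := by
          intro w hw
          rcases Finset.mem_insert.1 hw with rfl | hw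
          · exact hu
          · rw [Finset.mem_singleton.1 hw]; exact hv
        have hmem1 : p.1 ∈ ({u, v} : Finset V) := by rw [this, heq]; simp
        have hmem2 : p.2 ∈ ({u, v} : Finset V) := by rw [this, heq]; simp
        exact hunc s hs ⟨hin _ hmem1, hin _ hmem2⟩
    · push_neg at hcov
      refine ⟨{u, v}, ⟨Finset.mem_union_right _ ?_, by simp, by simp⟩, ?_⟩
      · rw [hL, Finset.mem_image]
        exact ⟨(u, v), Finset.mem_filter.2 ⟨by simp, hadj, fun s hs => by
          intro h; exact hcov s hs h.1 h.2⟩, rfl⟩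
      · rintro y ⟨hy, hyu, hyv⟩
        rcases Finset.mem_union.1 hy with hy | hy
        · exact absurd hyv (hcov y hy hyu)
        · obtain ⟨p, hpadj, -, heq⟩ := hLmem y hy
          have hsub : ({u, v} : Finset V) ⊆ y := by
            intro w hw
            rcases Finset.mem_insert.1 hw with rfl | hw
            · exact hyu
            · rw [Finset.mem_singleton.1 hw]; exact hyv
          exact (Finset.eq_of_subset_of_card_le hsub
            (by rw [heq, Finset.card_pair hpadj.ne, Finset.card_pair hadj.ne])).symm
  · intro s hs
    rcases Finset.mem_union.1 hs with hs | hs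
    · exact Or.inl hs
    · obtain ⟨p, hpadj, -, rfl⟩ := hLmem s hs
      exact Or.inr (Finset.card_pair hpadj.ne)

private lemma ceil_facts (d r : ℕ) (hr : 0 < r) :
    d ≤ r * ((d + r - 1) / r) ∧ r * ((d + r - 1) / r) < d + r := by
  have h1 := Nat.div_add_mod (d + r - 1) r
  have h2 : (d + r - 1) % r < r := Nat.mod_lt _ hr
  omega

private lemma ceil_cast (d r : ℕ) (hr : 0 < r) :
    (⌈(d : ℝ) / (r : ℝ)⌉ : ℤ) = (((d + r - 1) / r : ℕ) : ℤ) := by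
  obtain ⟨h1, h2⟩ := ceil_facts d r hr
  have hrpos : (0 : ℝ) < (r : ℝ) := by exact_mod_cast hr
  set q : ℕ := (d + r - 1) / r with hq
  have h1' : (d : ℝ) ≤ (r : ℝ) * q := by exact_mod_cast h1
  have h2' : (r : ℝ) * q < (d : ℝ) + r := by exact_mod_cast h2
  rw [Int.ceil_eq_iff]
  constructor
  · rw [lt_div_iff₀ hrpos]
    push_cast
    nlinarith
  · rw [div_le_iff₀ hrpos]
    push_cast
    nlinarith

end Comb


end Aux

set_option maxHeartbeats 2000000

/-- Equality in the spectral upper bound for `k_t(G)` holds if and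
only if `G` is regular and admits a `K_t`-decomposition. -/
theorem kT_eq_specRad_iff [Fintype V] [DecidableEq V] (G : SimpleGraph V) [DecidableRel G.Adj]
    (t : ℕ) (ht : 2 < t) (hconn : G.Connected) (hm : 1 ≤ G.edgeFinset.card) :
    (kT G t : ℝ) = (2 * (G.edgeFinset.card : ℝ) - specRad G -
        ((Fintype.card V : ℝ) - t + 1) * (⌈(G.minDegree : ℝ) / ((t : ℝ) - 1)⌉ : ℤ)) /
      ((t : ℝ) * ((t : ℝ) - 2)) ↔
      (∃ d, G.IsRegularOfDegree d) ∧
        ∃ P : Finset (Finset V), IsCliquePartition G P ∧ ∀ s ∈ P, s.card = t := by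
  classical
  -- ===== basic setup =====
  set n := Fintype.card V with hn
  set m := G.edgeFinset.card with hm'
  set r := t - 1 with hr
  have hr2 : 2 ≤ r := by omega
  have hr0 : 0 < r := by omega
  have hrR : (r : ℝ) = (t : ℝ) - 1 := by
    rw [hr]; push_cast [Nat.cast_sub (by omega : 1 ≤ t)]; ring
  have htR : (2 : ℝ) < (t : ℝ) := by exact_mod_cast ht
  have htt : (0 : ℝ) < (t : ℝ) * ((t : ℝ) - 2) := by nlinarith
  -- V is nonempty, there is an edge
  obtain ⟨e₀, he₀⟩ := Finset.card_pos.1 (lt_of_lt_of_le one_pos hm)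
  have hadj₀ : ∃ u v : V, G.Adj u v := by
    induction e₀ using Sym2.ind with
    | _ u v => exact ⟨u, v, (SimpleGraph.mem_edgeFinset.1 he₀)⟩
  obtain ⟨u₀, v₀, huv₀⟩ := hadj₀
  have : Nonempty V := ⟨u₀⟩
  -- minimum degree at least 1
  have hdegpos : ∀ v : V, 0 < G.degree v := by
    intro v
    rw [SimpleGraph.degree_pos_iff_exists_adj]
    have hwne : ∃ w : V, w ≠ v := by
      by_cases h : u₀ = v
      · exact ⟨v₀, fun hh => huv₀.ne (h.trans hh.symm)⟩
      · exact ⟨u₀, h⟩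
    obtain ⟨w, hw⟩ := hwne
    obtain ⟨p⟩ := hconn.preconnected v w
    cases p with
    | nil => exact absurd rfl (Ne.symm hw)
    | cons h q => exact ⟨_, h⟩
  have hδ1 : 1 ≤ G.minDegree :=
    SimpleGraph.le_minDegree_of_forall_le_degree G 1 (fun v => hdegpos v)
  set δ := G.minDegree with hδ
  set a : ℕ := (δ + r - 1) / r with ha
  set b : V → ℕ := fun v => (G.degree v + r - 1) / r with hb
  have hba : ∀ v, a ≤ b v := by
    intro v
    have := G.minDegree_le_degree v
    exact Nat.div_le_div_right (by omega)
  set eE : V → ℕ := fun v => b v - a with heE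
  have hbe : ∀ v, b v = a + eE v := fun v => by
    have h := hba v
    show b v = a + (b v - a)
    omega
  set S := ∑ v : V, eE v with hS
  have ha1 : 1 ≤ a := by
    rw [ha]
    rw [Nat.le_div_iff_mul_le hr0]
    omega
  have hdb : ∀ v, G.degree v ≤ r * b v := fun v => (ceil_facts _ _ hr0).1
  have hbd : ∀ v, r * b v < G.degree v + r := fun v => (ceil_facts _ _ hr0).2
  have hceil : ((⌈(δ : ℝ) / ((t : ℝ) - 1)⌉ : ℤ) : ℝ) = (a : ℝ) := by
    rw [← hrR]
    rw [ceil_cast δ r hr0, ← ha]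
    push_cast
    rfl
  -- ===== the test vector and Lemma A =====
  set x : V → ℝ := fun v => 1 + (eE v : ℝ) with hx'
  have hx : ∀ v, 0 < x v := fun v => by positivity
  set μ₀ : ℝ := ((r * a + S : ℕ) : ℝ) with hμ₀'
  have hμ₀R : μ₀ = (r : ℝ) * a + S := by rw [hμ₀']; push_cast; ring
  have hμ₀pos : 0 < μ₀ := by
    rw [hμ₀R]
    have : (1:ℝ) ≤ (r:ℝ) * a := by
      have : (1:ℕ) ≤ r * a := Nat.one_le_iff_ne_zero.2 (by positivity)
      exact_mod_cast this
    positivity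
  have hrowsum : ∀ v : V, ∑ w ∈ G.neighborFinset v, x w
      = (G.degree v : ℝ) + ∑ w ∈ G.neighborFinset v, (eE w : ℝ) := by
    intro v
    rw [hx']
    rw [Finset.sum_add_distrib, Finset.sum_const, SimpleGraph.card_neighborFinset_eq_degree]
    simp
  have hEsub : ∀ v : V, ∑ w ∈ G.neighborFinset v, (eE w : ℝ) ≤ (S : ℝ) := by
    intro v
    rw [hS]
    push_cast
    exact Finset.sum_le_sum_of_subset_of_nonneg (Finset.subset_univ _)
      (fun w _ _ => by positivity)
  have hrow : ∀ v : V, ∑ w ∈ G.neighborFinset v, x w ≤ μ₀ * x v := by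
    intro v
    rw [hrowsum v, hμ₀R, show x v = 1 + (eE v : ℝ) from rfl]
    have h1 : (G.degree v : ℝ) ≤ (r : ℝ) * a + (r : ℝ) * eE v := by
      have := hdb v
      rw [hbe v] at this
      have : (G.degree v : ℝ) ≤ ((r * (a + eE v) : ℕ) : ℝ) := by exact_mod_cast this
      push_cast at this
      linarith
    have h2 : (r : ℝ) * eE v ≤ ((r:ℝ) * a + S) * eE v := by
      have hra : (r : ℝ) ≤ (r:ℝ) * a + S := by
        have : (1:ℝ) ≤ (a:ℝ) := by exact_mod_cast ha1
        have hS0 : (0:ℝ) ≤ (S:ℝ) := by positivity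
        nlinarith
      exact mul_le_mul_of_nonneg_right hra (by positivity)
    have h3 := hEsub v
    nlinarith [h3, h1, h2]
  have hAle : specRad G ≤ μ₀ := specRad_le G hx hrow
  -- ===== maximum family and its extension =====
  have hKne : {mm | ∃ S : Finset (Finset V), (∀ s ∈ S, G.IsNClique t s) ∧
      (∀ s₁ ∈ S, ∀ s₂ ∈ S, s₁ ≠ s₂ → (s₁ ∩ s₂).card ≤ 1) ∧ S.card = mm}.Nonempty :=
    ⟨0, ∅, by simp, by simp, rfl⟩
  have hKbdd : BddAbove {mm | ∃ S : Finset (Finset V), (∀ s ∈ S, G.IsNClique t s) ∧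
      (∀ s₁ ∈ S, ∀ s₂ ∈ S, s₁ ≠ s₂ → (s₁ ∩ s₂).card ≤ 1) ∧ S.card = mm} := by
    refine ⟨Fintype.card (Finset V), ?_⟩
    rintro mm ⟨S, -, -, rfl⟩
    exact Finset.card_le_univ S
  have hKmem : ∃ S : Finset (Finset V), (∀ s ∈ S, G.IsNClique t s) ∧
      (∀ s₁ ∈ S, ∀ s₂ ∈ S, s₁ ≠ s₂ → (s₁ ∩ s₂).card ≤ 1) ∧ S.card = kT G t :=
    Nat.sSup_mem hKne hKbdd
  obtain ⟨F, hF1, hF2, hFcard⟩ := hKmem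
  obtain ⟨P₀, hP₀, hFP₀, hP₀card⟩ := exists_extension ht hF1 hF2
  set c : V → ℕ := fun v => (P₀.filter (v ∈ ·)).card with hc'
  have hdparts : ∀ v, G.degree v = ∑ s ∈ P₀.filter (v ∈ ·), (s.card - 1) :=
    degree_eq_sum_parts hP₀
  have hcardP : ∀ s ∈ P₀, s.card = t ∨ s.card = 2 := by
    intro s hs
    rcases hP₀card s hs with h | h
    · exact Or.inl (hF1 s h).2
    · exact Or.inr h
  have hdc : ∀ v, G.degree v ≤ r * c v := by
    intro v
    rw [hdparts v]
    calc ∑ s ∈ P₀.filter (v ∈ ·), (s.card - 1)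
        ≤ ∑ _s ∈ P₀.filter (v ∈ ·), r := by
          refine Finset.sum_le_sum fun s hs => ?_
          rcases hcardP s (Finset.mem_filter.1 hs).1 with h | h <;> omega
      _ = r * c v := by rw [Finset.sum_const, smul_eq_mul, mul_comm]
  have hcb : ∀ v, b v ≤ c v := by
    intro v
    have h1 := hbd v
    have h2 := hdc v
    have h3 : r * b v < r * (c v + 1) := by
      have h4 : r * (c v + 1) = r * c v + r := by ring
      omega
    exact Nat.lt_succ_iff.1 (Nat.lt_of_mul_lt_mul_left h3)
  have hsum1 : ∑ v : V, G.degree v = ∑ s ∈ P₀, s.card * (s.card - 1) := by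
    calc ∑ v : V, G.degree v = ∑ v : V, ∑ s ∈ P₀.filter (v ∈ ·), (s.card - 1) :=
        Finset.sum_congr rfl fun v _ => hdparts v
      _ = _ := double_count P₀ _
  have hsum2 : ∑ v : V, c v = ∑ s ∈ P₀, s.card := by
    have h := double_count P₀ (fun _ => 1)
    simp only [mul_one] at h
    calc ∑ v : V, c v = ∑ v : V, ∑ _s ∈ P₀.filter (v ∈ ·), 1 :=
        Finset.sum_congr rfl fun v _ => Finset.card_eq_sum_ones _
      _ = ∑ s ∈ P₀, s.card := h
  set l := (P₀ \ F).card with hl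
  have hA2 : ∀ s ∈ P₀ \ F, s.card = 2 := by
    intro s hs
    obtain ⟨hsP, hsF⟩ := Finset.mem_sdiff.1 hs
    rcases hP₀card s hsP with h | h
    · exact absurd h hsF
    · exact h
  have hsdA : ∑ s ∈ P₀, s.card * (s.card - 1) = l * 2 + F.card * (t * (t-1)) := by
    rw [← Finset.sum_sdiff hFP₀]
    have e1 : ∑ s ∈ P₀ \ F, s.card * (s.card - 1) = l * 2 := by
      rw [Finset.sum_congr rfl (fun s hs => by rw [hA2 s hs] : ∀ s ∈ P₀ \ F,
        s.card * (s.card - 1) = 2), Finset.sum_const, smul_eq_mul, hl]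
    have e2 : ∑ s ∈ F, s.card * (s.card - 1) = F.card * (t * (t-1)) := by
      rw [Finset.sum_congr rfl (fun s hs => by rw [(hF1 s hs).card_eq] : ∀ s ∈ F,
        s.card * (s.card - 1) = t * (t - 1)), Finset.sum_const, smul_eq_mul]
    rw [e1, e2]
  have hsdB : ∑ s ∈ P₀, s.card = l * 2 + F.card * t := by
    rw [← Finset.sum_sdiff hFP₀]
    have e1 : ∑ s ∈ P₀ \ F, s.card = l * 2 := by
      rw [Finset.sum_congr rfl hA2, Finset.sum_const, smul_eq_mul, hl]
    have e2 : ∑ s ∈ F, s.card = F.card * t := by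
      rw [Finset.sum_congr rfl (fun s hs => (hF1 s hs).card_eq), Finset.sum_const, smul_eq_mul]
    rw [e1, e2]
  have hd2m : ∑ v : V, G.degree v = 2 * m := G.sum_degrees_eq_twice_card_edges
  have hiden : ∑ v : V, c v + (t * (t-2)) * F.card = 2 * m := by
    have e1 : l * 2 + F.card * (t * (t-1)) = 2 * m := by rw [← hsdA, ← hsum1, hd2m]
    have e2 : ∑ v : V, c v = l * 2 + F.card * t := by rw [hsum2, hsdB]
    have e3 : F.card * (t * (t-1)) = F.card * t + (t * (t-2)) * F.card := by
      obtain ⟨k, hk⟩ : ∃ k, t = k + 3 := ⟨t - 3, by omega⟩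
      subst hk
      rw [show k + 3 - 1 = k + 2 from by omega, show k + 3 - 2 = k + 1 from by omega]
      ring
    omega
  have hSumb : ∑ v : V, b v = n * a + S := by
    calc ∑ v : V, b v = ∑ v : V, (a + eE v) := Finset.sum_congr rfl fun v _ => hbe v
      _ = n * a + S := by
          rw [Finset.sum_add_distrib, Finset.sum_const, Finset.card_univ, smul_eq_mul, ← hS, ← hn]
  have hSumcb : ∑ v : V, b v ≤ ∑ v : V, c v := Finset.sum_le_sum fun v _ => hcb v
  have httN : ((t * (t-2) : ℕ) : ℝ) = (t : ℝ) * ((t : ℝ) - 2) := by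
    push_cast [Nat.cast_sub (by omega : 2 ≤ t)]
    ring
  have hcast1 : (∑ v : V, c v : ℝ) + (t : ℝ) * ((t : ℝ) - 2) * (F.card : ℝ) = 2 * (m : ℝ) := by
    rw [← httN]
    exact_mod_cast hiden
  -- ===== the equivalence =====
  have hnr : ((n : ℝ) - t + 1) = (n : ℝ) - r := by rw [hrR]; ring
  constructor
  · -- forward direction
    intro hEq
    rw [eq_div_iff (ne_of_gt htt)] at hEq
    rw [hceil] at hEq
    have hEq' : specRad G = (∑ v : V, c v : ℝ) - ((n : ℝ) - r) * a := by
      rw [← hFcard] at hEq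
      linear_combination hEq - hcast1 - (a : ℝ) * hnr
    have hρ_ge : μ₀ ≤ specRad G := by
      rw [hEq', hμ₀R]
      have h1 : ((n * a + S : ℕ) : ℝ) ≤ ((∑ v : V, c v : ℕ) : ℝ) := by
        exact_mod_cast hSumb ▸ hSumcb
      push_cast at h1
      linarith
    have hρμ : specRad G = μ₀ := le_antisymm hAle hρ_ge
    have hSumceq : ∑ v : V, c v = n * a + S := by
      have hR : ((∑ v : V, c v : ℕ) : ℝ) = ((n * a + S : ℕ) : ℝ) := by
        push_cast
        rw [hEq', hμ₀R] at hρμ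
        linarith
      exact_mod_cast hR
    have hcb_eq : ∀ v, c v = b v := by
      have := (Finset.sum_eq_sum_iff_of_le (fun v _ => hcb v)).1 (hSumb.trans hSumceq.symm)
      exact fun v => ((this v (Finset.mem_univ v))).symm
    have heigμ : Module.End.HasEigenvalue (Matrix.toLin' (G.adjMatrix ℝ)) μ₀ := by
      rw [← hρμ]; exact specRad_mem G
    have htight := rows_tight G hconn hx hμ₀pos hrow heigμ
    have hS0 : S = 0 := by
      by_contra hS0
      have hSpos : 1 ≤ S := Nat.one_le_iff_ne_zero.2 hS0
      obtain ⟨v, hv⟩ : ∃ v : V, 1 ≤ eE v := by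
        by_contra hno
        push_neg at hno
        have : S = 0 := by
          rw [hS]
          exact Finset.sum_eq_zero fun v _ => by have := hno v; omega
        omega
      have h := htight v
      rw [hrowsum v, hμ₀R, show x v = 1 + (eE v : ℝ) from rfl] at h
      have h1 : (G.degree v : ℝ) ≤ (r : ℝ) * a + (r : ℝ) * eE v := by
        have h5 := hdb v
        rw [hbe v] at h5
        have h6 : (G.degree v : ℝ) ≤ ((r * (a + eE v) : ℕ) : ℝ) := by exact_mod_cast h5
        push_cast at h6
        linarith
      have h3 := hEsub v
      have hra : (r : ℝ) + 1 ≤ (r : ℝ) * a + S := by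
        have ha1' : (1 : ℝ) ≤ (a : ℝ) := by exact_mod_cast ha1
        have hS1' : (1 : ℝ) ≤ (S : ℝ) := by exact_mod_cast hSpos
        have hr' : (2 : ℝ) ≤ (r : ℝ) := by exact_mod_cast hr2
        nlinarith
      have hev1 : (1 : ℝ) ≤ (eE v : ℝ) := by exact_mod_cast hv
      nlinarith [mul_le_mul_of_nonneg_right hra (by positivity : (0 : ℝ) ≤ (eE v : ℝ))]
    have heE0 : ∀ v, eE v = 0 := by
      intro v
      have h6 : eE v ≤ S := by
        rw [hS]
        exact Finset.single_le_sum (f := fun v => eE v) (fun _ _ => Nat.zero_le _)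
          (Finset.mem_univ v)
      omega
    have hreg : G.IsRegularOfDegree (r * a) := by
      intro v
      have h := htight v
      rw [hrowsum v, hμ₀R, show x v = 1 + (eE v : ℝ) from rfl] at h
      have hEz : ∑ w ∈ G.neighborFinset v, (eE w : ℝ) = 0 :=
        Finset.sum_eq_zero fun w _ => by rw [heE0 w]; simp
      rw [hEz, heE0 v, hS0] at h
      have hR : ((G.degree v : ℕ) : ℝ) = ((r * a : ℕ) : ℝ) := by
        push_cast
        push_cast at h
        linarith
      exact_mod_cast hR
    have hall : ∀ s ∈ P₀, s.card = t := by
      intro s hs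
      rcases hP₀card s hs with hsF | h2
      · exact (hF1 s hsF).card_eq
      · exfalso
        obtain ⟨v, hv⟩ := Finset.card_pos.1 (by omega : 0 < s.card)
        have hfil : s ∈ P₀.filter (v ∈ ·) := Finset.mem_filter.2 ⟨hs, hv⟩
        have h3 : b v = a := by have h4 := hbe v; have h5 := heE0 v; omega
        have hdeq : ∑ s' ∈ P₀.filter (v ∈ ·), (s'.card - 1)
            = ∑ _s' ∈ P₀.filter (v ∈ ·), r := by
          rw [← hdparts v, Finset.sum_const, smul_eq_mul]
          rw [hreg v, show (P₀.filter (v ∈ ·)).card = c v from rfl, hcb_eq v, h3]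
          ring
        have hle : ∀ s' ∈ P₀.filter (v ∈ ·), s'.card - 1 ≤ r := fun s' hs' => by
          rcases hcardP s' (Finset.mem_filter.1 hs').1 with h | h <;> omega
        have := (Finset.sum_eq_sum_iff_of_le hle).1 hdeq s hfil
        omega
    exact ⟨⟨r * a, hreg⟩, P₀, hP₀, hall⟩
  · -- reverse direction
    rintro ⟨⟨d, hreg⟩, P, hP, hPt⟩
    set cP : V → ℕ := fun v => (P.filter (v ∈ ·)).card with hcP'
    have hdP : ∀ v : V, d = r * cP v := by
      intro v
      have h1 := degree_eq_sum_parts hP v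
      rw [hreg v] at h1
      rw [h1]
      have h2 : ∀ s ∈ P.filter (v ∈ ·), s.card - 1 = r := fun s hs => by
        have := hPt s (Finset.mem_filter.1 hs).1
        omega
      rw [Finset.sum_congr rfl h2, Finset.sum_const, smul_eq_mul, mul_comm]
    set q : ℕ := cP (Classical.arbitrary V) with hq'
    have hdq : d = r * q := hdP _
    have hcPq : ∀ v, cP v = q := fun v => Nat.eq_of_mul_eq_mul_left hr0 ((hdP v).symm.trans hdq)
    have hsumP : ∑ v : V, cP v = ∑ s ∈ P, s.card := by
      have h := double_count P (fun _ => 1)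
      simp only [mul_one] at h
      calc ∑ v : V, cP v = ∑ v : V, ∑ _s ∈ P.filter (v ∈ ·), 1 :=
          Finset.sum_congr rfl fun v _ => Finset.card_eq_sum_ones _
        _ = ∑ s ∈ P, s.card := h
    have hPt' : ∑ s ∈ P, s.card = P.card * t := by
      rw [Finset.sum_congr rfl hPt, Finset.sum_const, smul_eq_mul]
    have hnq : n * q = P.card * t := by
      rw [← hPt', ← hsumP, Finset.sum_congr rfl (fun v _ => hcPq v), Finset.sum_const,
        Finset.card_univ, smul_eq_mul, ← hn]
    have h2m : 2 * m = n * d := by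
      rw [← hd2m, Finset.sum_congr rfl (fun v _ => hreg v), Finset.sum_const,
        Finset.card_univ, smul_eq_mul, ← hn]
    have httpos : 0 < t * (t - 2) := Nat.mul_pos (by omega) (by omega)
    -- kT = P.card
    have hKup : kT G t ≤ P.card := by
      have hcq : ∀ v, q ≤ c v := by
        intro v
        have h1 := hdc v
        rw [hreg v, hdq] at h1
        exact Nat.le_of_mul_le_mul_left h1 hr0
      have hsc : n * q ≤ ∑ v : V, c v := by
        calc n * q = ∑ _v : V, q := by
              rw [Finset.sum_const, Finset.card_univ, smul_eq_mul, ← hn]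
          _ ≤ ∑ v : V, c v := Finset.sum_le_sum fun v _ => hcq v
      have e1 : (t * (t-2)) * F.card + n * q ≤ 2 * m := by omega
      have e4 : n * d = n * q + (t-2) * (n * q) := by
        rw [hdq]
        obtain ⟨k, hk⟩ : ∃ k, t = k + 3 := ⟨t - 3, by omega⟩
        subst hk
        rw [hr, show k + 3 - 1 = k + 2 from by omega, show k + 3 - 2 = k + 1 from by omega]
        ring
      have e6 : (t-2) * (n * q) = (t * (t-2)) * P.card := by
        rw [hnq]
        ring
      have e5 : (t * (t-2)) * F.card ≤ (t * (t-2)) * P.card := by omega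
      have hle := Nat.le_of_mul_le_mul_left e5 httpos
      omega
    have hKlow : P.card ≤ kT G t := by
      refine le_csSup hKbdd ⟨P, fun s hs => ⟨hP.1 s hs, hPt s hs⟩, ?_, rfl⟩
      intro s₁ h₁ s₂ h₂ hne
      exact part_inter_le_one hP h₁ h₂ hne
    have hKP : kT G t = P.card := le_antisymm hKup hKlow
    -- spectral radius equals d
    have hrd : specRad G ≤ (d : ℝ) := by
      refine specRad_le G (x := fun _ => 1) (fun v => one_pos) (fun v => ?_)
      rw [Finset.sum_const, nsmul_eq_mul, mul_one, mul_one,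
        SimpleGraph.card_neighborFinset_eq_degree, hreg v]
    have hdr : (d : ℝ) ≤ specRad G := by
      refine le_specRad G (Module.End.hasEigenvalue_of_hasEigenvector
        (x := fun _ => (1:ℝ)) ⟨Module.End.mem_eigenspace_iff.2 ?_, ?_⟩)
      · rw [Matrix.toLin'_apply]
        funext w
        rw [show ((G.adjMatrix ℝ *ᵥ fun _ => (1:ℝ)) w) = ∑ u ∈ G.neighborFinset w, (1:ℝ) from
          adjMatrix_mulVec_apply _ _ _]
        rw [Finset.sum_const, nsmul_eq_mul, mul_one, SimpleGraph.card_neighborFinset_eq_degree,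
          hreg w]
        simp
      · intro h
        exact one_ne_zero (congrFun h (Classical.arbitrary V))
    have hspecd : specRad G = (d : ℝ) := le_antisymm hrd hdr
    -- minimum degree equals d
    have hδd : δ = d := by
      obtain ⟨v, hv⟩ := G.exists_minimal_degree_vertex
      rw [hδ, hv, hreg v]
    have hrne : (r : ℝ) ≠ 0 := by
      have : (0:ℝ) < (r:ℝ) := by exact_mod_cast hr0
      linarith
    have hceil2 : ((⌈(δ : ℝ) / ((t : ℝ) - 1)⌉ : ℤ) : ℝ) = (q : ℝ) := by
      rw [← hrR, hδd]
      have hqq : (d : ℝ) / (r : ℝ) = (q : ℝ) := by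
        rw [hdq]
        push_cast
        field_simp
      rw [hqq]
      push_cast [Int.ceil_natCast]
      rfl
    rw [eq_div_iff (ne_of_gt htt), hceil2, hspecd, hKP]
    have hc1 : 2 * (m : ℝ) = (n : ℝ) * d := by exact_mod_cast h2m
    have hc2' : (d : ℝ) = ((t : ℝ) - 1) * q := by
      rw [← hrR]
      exact_mod_cast hdq
    have hc3 : (n : ℝ) * q = (P.card : ℝ) * t := by exact_mod_cast hnq
    linear_combination -hc1 + (1 - (n : ℝ)) * hc2' - ((t : ℝ) - 2) * hc3
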